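/- Let θ > 0 satisfy ψ(θ) < ∞, θψ'(θ) > ψ(θ), and the L log L condition. If C(θ) = 1 then P(Z_1(ℝ) ≤ 1) = 1, i.e., the reproduction law puts no mass on families of size ≥ 2. Equivalently, C(θ) < 1 if and only if P(Z_1(ℝ) ≥ 2) > 0. -/

import Mathlib

open MeasureTheory ProbabilityTheory Filter Set
open scoped ENNReal NNReal Topology Classical

noncomputable section

open MeasureTheory ProbabilityTheory Filter Set
open scoped ENNReal NNReal Topology Classical

noncomputable section

abbrev Label := List ℕ

/-- exponential `EReal → ℝ≥0∞` with `exp ⊥ = 0`, `exp ⊤ = ∞`. -/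
def eexp (x : EReal) : ℝ≥0∞ :=
  if x = ⊥ then 0 else if x = ⊤ then ⊤ else ENNReal.ofReal (Real.exp x.toReal)

/-- logarithm `ℝ≥0∞ → EReal`. -/
def elog (y : ℝ≥0∞) : EReal :=
  if y = 0 then ⊥ else if y = ⊤ then ⊤ else ((Real.log y.toReal : ℝ) : EReal)

/-- number of atoms of an extended-real position lying in a real set. -/
def cnt (A : Set ℝ) (x : EReal) : ℝ≥0∞ :=
  Set.indicator (Real.toEReal '' A) (fun _ => (1 : ℝ≥0∞)) x

/-- evaluation of a nonnegative test function at an extended position (dead particles ignored). -/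
def evalTest (φ : ℝ → ℝ) (x : EReal) : ℝ≥0∞ :=
  if x = ⊥ ∨ x = ⊤ then 0 else ENNReal.ofReal (φ x.toReal)

/-- `e^{-x}` for `x : ℝ≥0∞`. -/
def nexp (x : ℝ≥0∞) : ℝ≥0∞ :=
  if x = ⊤ then 0 else ENNReal.ofReal (Real.exp (-x.toReal))

/-- `log₊` on `ℝ≥0∞`. -/
def plog (x : ℝ≥0∞) : ℝ≥0∞ :=
  if x = ⊤ then ⊤ else ENNReal.ofReal (Real.log (max x.toReal 1))

variable {Ω : Type} [MeasurableSpace Ω]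

/-- A branching random walk: i.i.d. displacement point processes indexed by Ulam–Harris labels
(the label of a particle is the list of child indices along its ancestral line, most recent
first); `disp u ω i` is the displacement of the `i`-th child of particle `u`, equal to `⊥`
if this child does not exist. -/
structure BRW (Ω : Type) [MeasurableSpace Ω] (P : Measure Ω) where
  disp : Label → Ω → ℕ → EReal
  meas : ∀ u, Measurable (disp u)
  indep : iIndepFun (m := fun _ => inferInstance) disp P
  ident : ∀ u v, IdentDistrib (disp u) (disp v) P P

namespace BRW

variable {P : Measure Ω}

/-- position `V(u)` of the particle with label `u` (`⊥` if it is dead). -/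
def V (b : BRW Ω P) : Label → Ω → EReal
  | [], _ => 0
  | i :: u, ω => b.V u ω + b.disp u ω i

/-- maximal displacement at generation `n`. -/
def M (b : BRW Ω P) (n : ℕ) (ω : Ω) : EReal :=
  ⨆ u : {u : Label // u.length = n}, b.V u ω

/-- `E (Σ_{|u|=1} e^{θ V(u)})`. -/
def Lap (b : BRW Ω P) (θ : ℝ) : ℝ≥0∞ :=
  ∫⁻ ω, ∑' i : ℕ, (if b.V [i] ω = ⊥ then 0 else eexp ((θ : EReal) * b.V [i] ω)) ∂P

/-- the log-Laplace transform `ψ(θ)`. -/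
def ψe (b : BRW Ω P) (θ : ℝ) : EReal := elog (b.Lap θ)

/-- the Legendre transform `ψ*(x) = sup_{θ ≥ 0} (θ x − ψ(θ))`. -/
def ψStar (b : BRW Ω P) (x : ℝ) : EReal :=
  ⨆ θ : {θ : ℝ // 0 ≤ θ}, ((θ.1 * x : ℝ) : EReal) - b.ψe θ.1

/-- `x* = inf_{θ>0} ψ(θ)/θ`. -/
def xstar (b : BRW Ω P) : EReal :=
  ⨅ θ : {θ : ℝ // 0 < θ}, b.ψe θ.1 * ((θ.1⁻¹ : ℝ) : EReal)

/-- number of particles alive at generation `n`, i.e. `Z_n(ℝ)`. -/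
def ZR (b : BRW Ω P) (n : ℕ) (ω : Ω) : ℝ≥0∞ :=
  ∑' u : {u : Label // u.length = n}, if b.V u ω = ⊥ then 0 else 1

/-- number of particles at generation `n` located in `A`, i.e. `Z_n(A)`. -/
def Zset (b : BRW Ω P) (n : ℕ) (A : Set ℝ) (ω : Ω) : ℝ≥0∞ :=
  ∑' u : {u : Label // u.length = n}, cnt A (b.V u ω)

/-- mass of the extremal process `ℰ_n = Σ_{|u|=n} δ_{V(u)−M_n}` on a set `A`. -/
def Emeas (b : BRW Ω P) (n : ℕ) (ω : Ω) (A : Set ℝ) : ℝ≥0∞ :=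
  ∑' u : {u : Label // u.length = n}, cnt A (b.V u ω - b.M n ω)

/-- `ℰ_n(φ) = Σ_{|u|=n} φ(V(u)−M_n)`. -/
def Etest (b : BRW Ω P) (n : ℕ) (φ : ℝ → ℝ) (ω : Ω) : ℝ≥0∞ :=
  ∑' u : {u : Label // u.length = n}, evalTest φ (b.V u ω - b.M n ω)

/-- `W_1^θ = Σ_{|u|=1} e^{θ V(u)}`. -/
def W1 (b : BRW Ω P) (θ : ℝ) (ω : Ω) : ℝ≥0∞ :=
  ∑' i : ℕ, (if b.V [i] ω = ⊥ then 0 else eexp ((θ : EReal) * b.V [i] ω))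

/-- the `L log L` integrability condition (as3). -/
def LlogL (b : BRW Ω P) (θ : ℝ) : Prop :=
  ∫⁻ ω, b.W1 θ ω * plog (b.W1 θ ω) ∂P < ⊤

/-- the branching random walk is non-lattice (as4). -/
def NonLattice (b : BRW Ω P) : Prop :=
  ∀ c d : ℝ,
    P {ω | ∀ i : ℕ, b.V [i] ω ≠ ⊥ → ∃ k : ℤ, b.V [i] ω = ((c + d * k : ℝ) : EReal)} < 1

/-- `σ² = E (Σ_{|u|=1} (V(u) − ψ'(θ))² e^{θV(u)})` (as2). -/
def VarCond (b : BRW Ω P) (θ ψ' σ2 : ℝ) : Prop :=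
  (∫⁻ ω, ∑' i : ℕ, (if b.V [i] ω = ⊥ then 0 else
      ENNReal.ofReal (((b.V [i] ω).toReal - ψ') ^ 2) * eexp ((θ : EReal) * b.V [i] ω)) ∂P)
    = ENNReal.ofReal σ2

end BRW


/-- index type for the independent ingredients of the spine construction. -/
def SpIdx : Type := ℕ ⊕ (ℕ × ℕ)

def SpType : SpIdx → Type :=
  Sum.elim (fun _ => (ℕ → EReal) × ℕ) (fun _ => Label → EReal)

instance : ∀ i : SpIdx, MeasurableSpace (SpType i) := fun i => by
  cases i with
  | inl k => exact (inferInstance : MeasurableSpace ((ℕ → EReal) × ℕ))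
  | inr p => exact (inferInstance : MeasurableSpace (Label → EReal))

/-- The time-reversed spine construction for a branching random walk:
`B k · i = b_{k+1}(i)` is the displacement point process of the children of the spine at
time `k+1`, `W k = w^{(k+1)}` the spine index, `Vc i k = V^{(i,k+1)}` independent copies of
the branching random walk; `(B k, W k)` has the size-biased law with spine choice, all the
ingredients are independent, and the spine step has mean `ψ' = ψ'(θ)` with
`ψ = ψ(θ) < ∞`. -/
structure SpineSetup (Ω : Type) [MeasurableSpace Ω] (P : Measure Ω) (θ ψ ψ' : ℝ)
    extends BRW Ω P where
  B : ℕ → Ω → ℕ → EReal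
  W : ℕ → Ω → ℕ
  Vc : ℕ → ℕ → Label → Ω → EReal
  lapEq : toBRW.Lap θ = ENNReal.ofReal (Real.exp ψ)
  sbLaw : ∀ k : ℕ, ∀ f : (ℕ → EReal) × ℕ → ℝ≥0∞, Measurable f →
    ∫⁻ ω, f (B k ω, W k ω) ∂P
      = ∫⁻ ω, ∑' i : ℕ, (if toBRW.V [i] ω = ⊥ then 0 else
          eexp ((θ : EReal) * toBRW.V [i] ω - (ψ : EReal)) *
            f (fun j => toBRW.V [j] ω, i)) ∂P
  copyLaw : ∀ i k : ℕ, ∀ f : (Label → EReal) → ℝ≥0∞, Measurable f →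
    ∫⁻ ω, f (fun u => Vc i k u ω) ∂P = ∫⁻ ω, f (fun u => toBRW.V u ω) ∂P
  indepAll : iIndepFun (m := fun (i : SpIdx) => inferInstance)
    (fun i => Sum.rec (motive := fun i => Ω → SpType i)
      (fun k ω => (B k ω, W k ω)) (fun p ω u => Vc p.1 p.2 u ω) i) P
  stepInt : Integrable (fun ω => (B 0 ω (W 0 ω)).toReal) P
  stepMean : ∫ ω, (B 0 ω (W 0 ω)).toReal ∂P = ψ'

namespace SpineSetup

variable {P : Measure Ω} {θ ψ ψ' : ℝ}

/-- the spine random walk `S_n = Σ_{k=1}^n b_k(w^{(k)})`. -/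
def S (s : SpineSetup Ω P θ ψ ψ') (n : ℕ) (ω : Ω) : ℝ :=
  ∑ k ∈ Finset.range n, (s.B k ω (s.W k ω)).toReal

/-- the atom `b_{k+1}(i) + V^{(i,k+1)}(u) − S_{k+1}` of the decoration measure. -/
def atom (s : SpineSetup Ω P θ ψ ψ') (k i : ℕ) (u : Label) (ω : Ω) : EReal :=
  s.B k ω i + s.Vc i k u ω - ((s.S (k + 1) ω : ℝ) : EReal)

/-- mass of `D_n^θ` on a set `A ⊆ ℝ`. -/
def Dn (s : SpineSetup Ω P θ ψ ψ') (n : ℕ) (ω : Ω) (A : Set ℝ) : ℝ≥0∞ :=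
  cnt A 0 + ∑ k ∈ Finset.range n, ∑' i : ℕ, ∑' u : {u : Label // u.length = k},
    if i = s.W k ω then 0 else cnt A (s.atom k i u ω)

/-- mass of `D_∞^θ` on a set `A ⊆ ℝ`. -/
def Dinf (s : SpineSetup Ω P θ ψ ψ') (ω : Ω) (A : Set ℝ) : ℝ≥0∞ :=
  cnt A 0 + ∑' k : ℕ, ∑' i : ℕ, ∑' u : {u : Label // u.length = k},
    if i = s.W k ω then 0 else cnt A (s.atom k i u ω)

/-- `D_n^θ(φ)` for a nonnegative test function `φ`. -/
def Dtest (s : SpineSetup Ω P θ ψ ψ') (n : ℕ) (φ : ℝ → ℝ) (ω : Ω) : ℝ≥0∞ :=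
  ENNReal.ofReal (φ 0) + ∑ k ∈ Finset.range n, ∑' i : ℕ, ∑' u : {u : Label // u.length = k},
    if i = s.W k ω then 0 else evalTest φ (s.atom k i u ω)

/-- `D_∞^θ(φ)` for a nonnegative test function `φ`. -/
def DtestInf (s : SpineSetup Ω P θ ψ ψ') (φ : ℝ → ℝ) (ω : Ω) : ℝ≥0∞ :=
  ENNReal.ofReal (φ 0) + ∑' k : ℕ, ∑' i : ℕ, ∑' u : {u : Label // u.length = k},
    if i = s.W k ω then 0 else evalTest φ (s.atom k i u ω)

/-- `C(θ) = E ( (1/D_∞^θ({0})) 1_{D_∞^θ((0,∞)) = 0} )`. -/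
def Cmass (s : SpineSetup Ω P θ ψ ψ') : ℝ≥0∞ :=
  ∫⁻ ω, (if s.Dinf ω (Set.Ioi 0) = 0 then (s.Dinf ω {0})⁻¹ else 0) ∂P

/-- the event `A_{n+1,ε}` of Lemma 2.3. -/
def Aev (s : SpineSetup Ω P θ ψ ψ') (n : ℕ) (ε : ℝ) : Set Ω :=
  {ω | ∀ ℓ, n ≤ ℓ →
    (⨆ k : ℕ, (s.B ℓ ω k + ⨆ u : {u : Label // u.length = ℓ}, s.Vc k ℓ u ω))
      - ((s.S (ℓ + 1) ω : ℝ) : EReal) < ((-ε * (ℓ + 1) : ℝ) : EReal)}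

end SpineSetup


lemma aux_ae_eq_one {Ω : Type} [MeasurableSpace Ω] {P : Measure Ω} [IsProbabilityMeasure P]
    {g : Ω → ℝ≥0∞} (hg : ∀ ω, g ω ≤ 1)
    (h : ∫⁻ ω, g ω ∂P = 1) : ∀ᵐ ω ∂P, g ω = 1 := by
  obtain ⟨h0, hm, hle, heq⟩ := exists_measurable_le_lintegral_eq P g
  have hint : ∫⁻ ω, h0 ω ∂P = 1 := by rw [← heq, h]
  have hle1 : ∀ ω, h0 ω ≤ 1 := fun ω => (hle ω).trans (hg ω)
  have hsub : ∫⁻ ω, (1 - h0 ω) ∂P = 0 := by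
    rw [lintegral_sub hm (by rw [hint]; exact ENNReal.one_ne_top)
      (Filter.Eventually.of_forall hle1)]
    rw [lintegral_one, measure_univ, hint, tsub_self]
  have h1 : ∀ᵐ ω ∂P, (1 : ℝ≥0∞) - h0 ω = 0 :=
    (lintegral_eq_zero_iff (measurable_const.sub hm)).1 hsub
  filter_upwards [h1] with ω hω
  exact le_antisymm (hg ω) ((tsub_eq_zero_iff_le.1 hω).trans (hle ω))

lemma aux_prob_eq_one {Ω : Type} [MeasurableSpace Ω] {P : Measure Ω} [IsProbabilityMeasure P]
    {s : Set Ω} (h : ∀ᵐ ω ∂P, ω ∈ s) : P s = 1 := by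
  have hc : P sᶜ = 0 := by
    rw [measure_eq_zero_iff_ae_notMem]
    filter_upwards [h] with ω hω hn
    exact hn hω
  refine le_antisymm prob_le_one ?_
  calc (1:ℝ≥0∞) = P Set.univ := measure_univ.symm
    _ ≤ P s + P sᶜ := by rw [← Set.union_compl_self s]; exact measure_union_le _ _
    _ = P s := by rw [hc, add_zero]

lemma aux_eexp_coe (r : ℝ) : eexp (r : EReal) = ENNReal.ofReal (Real.exp r) := by
  rw [eexp, if_neg (EReal.coe_ne_bot r), if_neg (EReal.coe_ne_top r), EReal.toReal_coe]

lemma aux_eexp_bot : eexp ⊥ = 0 := by simp [eexp]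

lemma aux_eexp_top : eexp ⊤ = ⊤ := by simp [eexp]

lemma aux_E_mono {θ ψ : ℝ} (hθ : 0 < θ) :
    Monotone (fun x : EReal => eexp ((θ : EReal) * x - (ψ : EReal))) := by
  intro x y hxy
  induction x using EReal.rec with
  | bot => simp [EReal.mul_bot_of_pos (EReal.coe_pos.2 hθ), EReal.bot_sub, aux_eexp_bot]
  | top => rw [top_le_iff.1 hxy]
  | coe a =>
    induction y using EReal.rec with
    | bot => exact absurd hxy (by simp)
    | top =>
      simp only [EReal.mul_top_of_pos (EReal.coe_pos.2 hθ), EReal.top_sub_coe, aux_eexp_top]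
      exact le_top
    | coe c =>
      simp only [← EReal.coe_mul, ← EReal.coe_sub, aux_eexp_coe]
      refine ENNReal.ofReal_le_ofReal (Real.exp_le_exp.2 ?_)
      have := EReal.coe_le_coe_iff.1 hxy
      nlinarith

lemma aux_E_ne_zero {θ ψ : ℝ} (hθ : 0 < θ) {x : EReal} (hx : x ≠ ⊥) :
    eexp ((θ : EReal) * x - (ψ : EReal)) ≠ 0 := by
  induction x using EReal.rec with
  | bot => exact absurd rfl hx
  | top =>
    rw [EReal.mul_top_of_pos (EReal.coe_pos.2 hθ), EReal.top_sub_coe, aux_eexp_top]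
    exact ENNReal.top_ne_zero
  | coe a =>
    rw [← EReal.coe_mul, ← EReal.coe_sub, aux_eexp_coe]
    exact (ENNReal.ofReal_pos.2 (Real.exp_pos _)).ne'

lemma aux_E_sub {θ ψ : ℝ} (hθ : 0 < θ) (x : EReal) :
    eexp ((θ : EReal) * x - (ψ : EReal))
      = ENNReal.ofReal (Real.exp (-ψ)) * eexp ((θ : EReal) * x) := by
  induction x using EReal.rec with
  | bot =>
    rw [EReal.mul_bot_of_pos (EReal.coe_pos.2 hθ), EReal.bot_sub, aux_eexp_bot, mul_zero]
  | top =>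
    rw [EReal.mul_top_of_pos (EReal.coe_pos.2 hθ), EReal.top_sub_coe, aux_eexp_top,
      ENNReal.mul_top (ENNReal.ofReal_pos.2 (Real.exp_pos _)).ne']
  | coe a =>
    rw [← EReal.coe_mul, ← EReal.coe_sub, aux_eexp_coe, aux_eexp_coe,
      ← ENNReal.ofReal_mul (Real.exp_nonneg _), ← Real.exp_add]
    ring_nf

lemma aux_cnt_bot (A : Set ℝ) : cnt A ⊥ = 0 :=
  Set.indicator_of_notMem (by rintro ⟨r, -, hr⟩; exact EReal.coe_ne_bot r hr) _

lemma aux_cnt_zero_singleton : cnt {0} (0 : EReal) = 1 :=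
  Set.indicator_of_mem (show (0:EReal) ∈ Real.toEReal '' {0} from ⟨0, rfl, EReal.coe_zero⟩) _

lemma aux_cnt_zero_Ioi : cnt (Set.Ioi 0) (0 : EReal) = 0 := by
  refine Set.indicator_of_notMem ?_ _
  rintro ⟨r, hr, h⟩
  rw [show Real.toEReal r = (r : EReal) from rfl, EReal.coe_eq_zero] at h
  rw [h] at hr
  exact lt_irrefl 0 (Set.mem_Ioi.1 hr)

def auxBadF : (ℕ → EReal) × ℕ → ℝ≥0∞ := fun p =>
  if ∃ j, j ≠ p.2 ∧ p.1 j ≠ ⊥ ∧ p.1 j ≠ ⊤ ∧ (p.1 p.2).toReal ≤ (p.1 j).toReal then 1 else 0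

lemma auxBadF_measurable : Measurable auxBadF := by
  apply measurable_from_prod_countable_left
  intro i
  have hS : MeasurableSet {v : ℕ → EReal |
      ∃ j, j ≠ i ∧ v j ≠ ⊥ ∧ v j ≠ ⊤ ∧ (v i).toReal ≤ (v j).toReal} := by
    have heq : {v : ℕ → EReal | ∃ j, j ≠ i ∧ v j ≠ ⊥ ∧ v j ≠ ⊤ ∧ (v i).toReal ≤ (v j).toReal}
        = ⋃ j, {v : ℕ → EReal | j ≠ i ∧ v j ≠ ⊥ ∧ v j ≠ ⊤ ∧ (v i).toReal ≤ (v j).toReal} := by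
      ext v; simp
    rw [heq]
    refine MeasurableSet.iUnion fun j => ?_
    by_cases hj : j = i
    · have : {v : ℕ → EReal | j ≠ i ∧ v j ≠ ⊥ ∧ v j ≠ ⊤ ∧ (v i).toReal ≤ (v j).toReal} = ∅ := by
        ext v; simp [hj]
      rw [this]; exact MeasurableSet.empty
    · have : {v : ℕ → EReal | j ≠ i ∧ v j ≠ ⊥ ∧ v j ≠ ⊤ ∧ (v i).toReal ≤ (v j).toReal}
          = ((fun v : ℕ → EReal => v j) ⁻¹' {⊥}ᶜ) ∩
            (((fun v : ℕ → EReal => v j) ⁻¹' {⊤}ᶜ) ∩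
              {v : ℕ → EReal | (v i).toReal ≤ (v j).toReal}) := by
        ext v; simp [hj]
      rw [this]
      exact ((measurable_pi_apply j) ((measurableSet_singleton ⊥).compl)).inter
        (((measurable_pi_apply j) ((measurableSet_singleton ⊤).compl)).inter
          (measurableSet_le (measurable_ereal_toReal.comp (measurable_pi_apply i))
            (measurable_ereal_toReal.comp (measurable_pi_apply j))))
  exact Measurable.ite hS measurable_const measurable_const

def auxAloneF : (ℕ → EReal) × ℕ → ℝ≥0∞ := fun p =>
  if ∀ j, j ≠ p.2 → p.1 j = ⊥ then 1 else 0

lemma auxAloneF_measurable : Measurable auxAloneF := by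
  apply measurable_from_prod_countable_left
  intro i
  have hS : MeasurableSet {v : ℕ → EReal | ∀ j, j ≠ i → v j = ⊥} := by
    have heq : {v : ℕ → EReal | ∀ j, j ≠ i → v j = ⊥}
        = ⋂ j, {v : ℕ → EReal | j ≠ i → v j = ⊥} := by
      ext v; simp
    rw [heq]
    refine MeasurableSet.iInter fun j => ?_
    by_cases hj : j = i
    · have : {v : ℕ → EReal | j ≠ i → v j = ⊥} = Set.univ := by
        ext v; simp [hj]
      rw [this]; exact MeasurableSet.univ
    · have : {v : ℕ → EReal | j ≠ i → v j = ⊥} = (fun v : ℕ → EReal => v j) ⁻¹' {⊥} := by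
        ext v; simp [hj]
      rw [this]; exact (measurable_pi_apply j) (measurableSet_singleton ⊥)
  exact Measurable.ite hS measurable_const measurable_const

def auxRootF : (Label → EReal) → ℝ≥0∞ := fun g => if g [] = 0 then 1 else 0

lemma auxRootF_measurable : Measurable auxRootF :=
  Measurable.ite ((measurable_pi_apply ([] : Label)) (measurableSet_singleton 0))
    measurable_const measurable_const

namespace BRW

variable {Ω : Type} [MeasurableSpace Ω] {P : MeasureTheory.Measure Ω}

lemma aux_measV (b : BRW Ω P) (i : ℕ) : Measurable fun ω => b.V [i] ω := by
  have heq : (fun ω => b.V [i] ω) = fun ω => b.disp [] ω i := by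
    funext ω; simp [BRW.V]
  rw [heq]
  exact (measurable_pi_apply i).comp (b.meas [])

lemma aux_measVv (b : BRW Ω P) : Measurable fun ω => (fun j => b.V [j] ω) :=
  measurable_pi_lambda _ (fun i => b.aux_measV i)

lemma aux_meas_sum (b : BRW Ω P) (F : EReal → ℝ≥0∞) (hF : Measurable F)
    (G : (ℕ → EReal) × ℕ → ℝ≥0∞) (hG : Measurable G) :
    Measurable fun ω => ∑' i : ℕ,
      (if b.V [i] ω = ⊥ then 0 else F (b.V [i] ω) * G (fun j => b.V [j] ω, i)) := by
  refine Measurable.ennreal_tsum fun i => ?_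
  refine Measurable.ite ((b.aux_measV i) (measurableSet_singleton ⊥)) measurable_const ?_
  exact (hF.comp (b.aux_measV i)).mul (hG.comp ((b.aux_measVv).prodMk measurable_const))

lemma aux_meas_sum0 (b : BRW Ω P) (F : EReal → ℝ≥0∞) (hF : Measurable F) :
    Measurable fun ω => ∑' i : ℕ, (if b.V [i] ω = ⊥ then 0 else F (b.V [i] ω)) := by
  refine Measurable.ennreal_tsum fun i => ?_
  exact Measurable.ite ((b.aux_measV i) (measurableSet_singleton ⊥)) measurable_const
    (hF.comp (b.aux_measV i))

lemma aux_ZR_le_one {b : BRW Ω P} {ω : Ω}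
    (h : ∀ i j, b.V [i] ω ≠ ⊥ → b.V [j] ω ≠ ⊥ → i = j) : b.ZR 1 ω ≤ 1 := by
  rw [BRW.ZR]
  by_cases hex : ∃ i, b.V [i] ω ≠ ⊥
  · obtain ⟨i₀, hi₀⟩ := hex
    rw [tsum_eq_single (⟨[i₀], rfl⟩ : {u : Label // u.length = 1})]
    · split <;> simp
    · rintro ⟨u, hu⟩ hne
      obtain ⟨a, rfl⟩ := List.length_eq_one_iff.1 hu
      have ha : b.V [a] ω = ⊥ := by
        by_contra hab
        exact hne (Subtype.ext (by rw [h a i₀ hab hi₀]))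
      simp only [ha, if_pos]
  · push_neg at hex
    have hall : ∀ u : {u : Label // u.length = 1},
        (if b.V u.1 ω = ⊥ then (0:ℝ≥0∞) else 1) = 0 := by
      rintro ⟨u, hu⟩
      obtain ⟨a, rfl⟩ := List.length_eq_one_iff.1 hu
      simp only [hex a, if_pos]
    rw [tsum_congr hall, tsum_zero]
    exact zero_le_one

lemma aux_two_le_ZR {b : BRW Ω P} {ω : Ω} {i j : ℕ} (hij : i ≠ j)
    (hi : b.V [i] ω ≠ ⊥) (hj : b.V [j] ω ≠ ⊥) : 2 ≤ b.ZR 1 ω := by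
  rw [BRW.ZR]
  have hne : (⟨[i], rfl⟩ : {u : Label // u.length = 1}) ≠ ⟨[j], rfl⟩ := by
    simp [Subtype.ext_iff, hij]
  calc (2:ℝ≥0∞) = (if b.V [i] ω = ⊥ then 0 else 1) + (if b.V [j] ω = ⊥ then 0 else 1) := by
        rw [if_neg hi, if_neg hj]; norm_num
    _ = ∑ u ∈ ({⟨[i], rfl⟩, ⟨[j], rfl⟩} : Finset {u : Label // u.length = 1}),
          (if b.V u.1 ω = ⊥ then (0:ℝ≥0∞) else 1) :=
        (Finset.sum_pair (f := fun u : {u : Label // u.length = 1} =>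
          (if b.V u.1 ω = ⊥ then (0:ℝ≥0∞) else 1)) hne).symm
    _ ≤ ∑' u : {u : Label // u.length = 1}, (if b.V u.1 ω = ⊥ then (0:ℝ≥0∞) else 1) :=
        ENNReal.sum_le_tsum _

end BRW

lemma auxBadF_eq (v : ℕ → EReal) (i : ℕ) :
    auxBadF (v, i) = if ∃ j, j ≠ i ∧ v j ≠ ⊥ ∧ v j ≠ ⊤ ∧ (v i).toReal ≤ (v j).toReal
      then 1 else 0 := rfl

lemma auxAloneF_eq (v : ℕ → EReal) (i : ℕ) :
    auxAloneF (v, i) = if ∀ j, j ≠ i → v j = ⊥ then 1 else 0 := rfl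

lemma auxRootF_eq (g : Label → EReal) : auxRootF g = if g [] = 0 then 1 else 0 := rfl

/-- (Lemma 3.4) Under (as1) and (as3), `C(θ) = 1` implies
`P(Z_1(ℝ) ≤ 1) = 1`; equivalently `C(θ) < 1 ↔ P(Z_1(ℝ) ≥ 2) > 0`. -/
theorem constant_lt_one_iff_branching
    {Ω : Type} [MeasurableSpace Ω] {P : Measure Ω} [IsProbabilityMeasure P]
    {θ ψ ψ' : ℝ} (s : SpineSetup Ω P θ ψ ψ')
    (hθ : 0 < θ) (hsp : ψ < θ * ψ') (hL : s.toBRW.LlogL θ) :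
    (s.Cmass = 1 → P {ω | s.toBRW.ZR 1 ω ≤ 1} = 1) ∧
    (s.Cmass < 1 ↔ 0 < P {ω | 2 ≤ s.toBRW.ZR 1 ω}) := by
  classical
  have hint_le : ∀ ω, (if s.Dinf ω (Set.Ioi 0) = 0 then (s.Dinf ω {0})⁻¹ else 0) ≤ 1 := by
    intro ω
    split
    · rw [ENNReal.inv_le_one, SpineSetup.Dinf, aux_cnt_zero_singleton]
      exact le_self_add
    · exact zero_le_one
  have hCle : s.Cmass ≤ 1 := by
    rw [SpineSetup.Cmass]
    calc ∫⁻ ω, (if s.Dinf ω (Set.Ioi 0) = 0 then (s.Dinf ω {0})⁻¹ else 0) ∂P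
        ≤ ∫⁻ _, 1 ∂P := lintegral_mono hint_le
      _ = 1 := by rw [lintegral_one, measure_univ]
  have hlap := s.lapEq
  rw [BRW.Lap] at hlap
  have hmeasLap : Measurable fun ω => ∑' i : ℕ,
      (if s.toBRW.V [i] ω = ⊥ then 0 else eexp ((θ : EReal) * s.toBRW.V [i] ω)) := by
    refine BRW.aux_meas_sum0 s.toBRW (fun x => eexp ((θ : EReal) * x)) ?_
    have hmono : Monotone fun x : EReal => eexp ((θ : EReal) * x) := by
      have heq : (fun x : EReal => eexp ((θ : EReal) * x))
          = fun x : EReal => eexp ((θ : EReal) * x - ((0 : ℝ) : EReal)) := by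
        funext x; rw [EReal.coe_zero, sub_zero]
      rw [heq]; exact aux_E_mono hθ
    exact hmono.measurable
  have hTop : ∀ᵐ ω ∂P, ∀ i : ℕ, s.toBRW.V [i] ω ≠ ⊤ := by
    have h1 := ae_lt_top hmeasLap (by rw [hlap]; exact ENNReal.ofReal_ne_top)
    filter_upwards [h1] with ω hω i hEq
    have htop : (if s.toBRW.V [i] ω = ⊥ then (0:ℝ≥0∞)
        else eexp ((θ : EReal) * s.toBRW.V [i] ω)) = ⊤ := by
      rw [hEq, if_neg (by simp), EReal.mul_top_of_pos (EReal.coe_pos.2 hθ), aux_eexp_top]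
    exact hω.ne (top_le_iff.1 (htop ▸ ENNReal.le_tsum
      (f := fun i => if s.toBRW.V [i] ω = ⊥ then (0:ℝ≥0∞)
        else eexp ((θ : EReal) * s.toBRW.V [i] ω)) i))
  -- Main claim: Cmass = 1 implies a.s. at most one live child in generation 1
  have hC : s.Cmass = 1 → ∀ᵐ ω ∂P, ∀ i j : ℕ,
      s.toBRW.V [i] ω ≠ ⊥ → s.toBRW.V [j] ω ≠ ⊥ → i = j := by
    intro hc
    rw [SpineSetup.Cmass] at hc
    have hg1 := aux_ae_eq_one hint_le hc
    have hVc : ∀ᵐ ω ∂P, ∀ i : ℕ, s.Vc i 0 ([] : Label) ω = 0 := by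
      rw [ae_all_iff]
      intro i
      have hlaw := s.copyLaw i 0 auxRootF auxRootF_measurable
      have hone : ∫⁻ ω, auxRootF (fun u => s.Vc i 0 u ω) ∂P = 1 := by
        rw [hlaw]
        have hcon : ∀ ω, auxRootF (fun u => s.toBRW.V u ω) = 1 := by
          intro ω; rw [auxRootF_eq]; simp [BRW.V]
        rw [lintegral_congr hcon, lintegral_one, measure_univ]
      have hae := aux_ae_eq_one (g := fun ω => auxRootF (fun u => s.Vc i 0 u ω))
        (fun ω => by show auxRootF (fun u => s.Vc i 0 u ω) ≤ 1
                     rw [auxRootF_eq]; split <;> simp) hone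
      filter_upwards [hae] with ω hω
      by_contra hne
      rw [auxRootF_eq, if_neg hne] at hω
      exact zero_ne_one hω
    have hAtom : ∀ᵐ ω ∂P, ∀ i : ℕ, i ≠ s.W 0 ω →
        cnt {0} (s.atom 0 i ([] : Label) ω) = 0 ∧
        cnt (Set.Ioi 0) (s.atom 0 i ([] : Label) ω) = 0 := by
      filter_upwards [hg1] with ω hω i hi
      by_cases h0 : s.Dinf ω (Set.Ioi 0) = 0
      swap
      · rw [if_neg h0] at hω; exact absurd hω zero_ne_one
      rw [if_pos h0, ENNReal.inv_eq_one] at hω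
      constructor
      · rw [SpineSetup.Dinf, aux_cnt_zero_singleton] at hω
        have hT0 : (∑' k : ℕ, ∑' i : ℕ, ∑' u : {u : Label // u.length = k},
            if i = s.W k ω then 0 else cnt {0} (s.atom k i u ω)) = 0 :=
          (ENNReal.add_right_inj ENNReal.one_ne_top).1 (by rw [add_zero]; exact hω)
        have h4 := ENNReal.tsum_eq_zero.1 (ENNReal.tsum_eq_zero.1
          (ENNReal.tsum_eq_zero.1 hT0 0) i) ⟨[], rfl⟩
        rw [if_neg hi] at h4
        exact h4
      · rw [SpineSetup.Dinf] at h0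
        have hT0 : (∑' k : ℕ, ∑' i : ℕ, ∑' u : {u : Label // u.length = k},
            if i = s.W k ω then 0 else cnt (Set.Ioi 0) (s.atom k i u ω)) = 0 :=
          (add_eq_zero.1 h0).2
        have h4 := ENNReal.tsum_eq_zero.1 (ENNReal.tsum_eq_zero.1
          (ENNReal.tsum_eq_zero.1 hT0 0) i) ⟨[], rfl⟩
        rw [if_neg hi] at h4
        exact h4
    have hbad : ∀ᵐ ω ∂P, auxBadF (s.B 0 ω, s.W 0 ω) = 0 := by
      filter_upwards [hAtom, hVc] with ω hA hV0
      have hnc : ¬ ∃ j : ℕ, j ≠ s.W 0 ω ∧ s.B 0 ω j ≠ ⊥ ∧ s.B 0 ω j ≠ ⊤ ∧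
          (s.B 0 ω (s.W 0 ω)).toReal ≤ (s.B 0 ω j).toReal := by
        rintro ⟨j, hji, hjb, hjt, hle⟩
        have hr := EReal.coe_toReal hjt hjb
        have hsp1 : s.S 1 ω = (s.B 0 ω (s.W 0 ω)).toReal := by
          rw [SpineSetup.S, Finset.sum_range_one]
        have hatom : s.atom 0 j ([] : Label) ω
            = (((s.B 0 ω j).toReal - s.S 1 ω : ℝ) : EReal) := by
          rw [SpineSetup.atom, hV0 j, add_zero, EReal.coe_sub, hr]
        obtain ⟨hA1, hA2⟩ := hA j hji
        have hge : (0:ℝ) ≤ (s.B 0 ω j).toReal - s.S 1 ω := by rw [hsp1]; linarith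
        rcases eq_or_lt_of_le hge with heq | hlt
        · have hmem : cnt {0} ((((s.B 0 ω j).toReal - s.S 1 ω : ℝ)) : EReal) = 1 :=
            Set.indicator_of_mem (show ((((s.B 0 ω j).toReal - s.S 1 ω : ℝ)) : EReal)
              ∈ Real.toEReal '' ({0} : Set ℝ) from
                ⟨(s.B 0 ω j).toReal - s.S 1 ω, heq.symm, rfl⟩) _
          rw [hatom, hmem] at hA1
          exact one_ne_zero hA1
        · have hmem : cnt (Set.Ioi 0) ((((s.B 0 ω j).toReal - s.S 1 ω : ℝ)) : EReal) = 1 :=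
            Set.indicator_of_mem (show ((((s.B 0 ω j).toReal - s.S 1 ω : ℝ)) : EReal)
              ∈ Real.toEReal '' (Set.Ioi (0:ℝ)) from
                ⟨(s.B 0 ω j).toReal - s.S 1 ω, hlt, rfl⟩) _
          rw [hatom, hmem] at hA2
          exact one_ne_zero hA2
      rw [auxBadF_eq, if_neg hnc]
    have hLHS : ∫⁻ ω, auxBadF (s.B 0 ω, s.W 0 ω) ∂P = 0 :=
      (lintegral_congr_ae hbad).trans lintegral_zero
    have hRHS : ∫⁻ ω, ∑' i : ℕ, (if s.toBRW.V [i] ω = ⊥ then 0 else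
        eexp ((θ : EReal) * s.toBRW.V [i] ω - (ψ : EReal))
          * auxBadF (fun j => s.toBRW.V [j] ω, i)) ∂P = 0 := by
      rw [← s.sbLaw 0 auxBadF auxBadF_measurable]
      exact hLHS
    have hmeasR := BRW.aux_meas_sum s.toBRW
      (fun x => eexp ((θ : EReal) * x - (ψ : EReal))) (aux_E_mono hθ).measurable
      auxBadF auxBadF_measurable
    have hae0 := (lintegral_eq_zero_iff hmeasR).1 hRHS
    filter_upwards [hae0, hTop] with ω h0 hT i j hi hj
    simp only [Pi.zero_apply] at h0
    have hterm := ENNReal.tsum_eq_zero.1 h0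
    have key : ∀ a c : ℕ, a ≠ c → s.toBRW.V [a] ω ≠ ⊥ → s.toBRW.V [c] ω ≠ ⊥ →
        (s.toBRW.V [a] ω).toReal < (s.toBRW.V [c] ω).toReal := by
      intro a c hac ha hc2
      have htc := hterm c
      rw [if_neg hc2] at htc
      have hfc : auxBadF (fun j => s.toBRW.V [j] ω, c) = 0 :=
        (mul_eq_zero.1 htc).resolve_left (aux_E_ne_zero hθ hc2)
      by_contra hnlt
      push_neg at hnlt
      rw [auxBadF_eq, if_pos ⟨a, hac, ha, hT a, hnlt⟩] at hfc
      exact one_ne_zero hfc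
    by_contra hij
    have h1 := key i j hij hi hj
    have h2 := key j i (Ne.symm hij) hj hi
    linarith
  -- Converse: no branching implies Cmass = 1
  have hB : P {ω | 2 ≤ s.toBRW.ZR 1 ω} = 0 → s.Cmass = 1 := by
    intro h2
    have hamo : ∀ᵐ ω ∂P, ∀ i j : ℕ,
        s.toBRW.V [i] ω ≠ ⊥ → s.toBRW.V [j] ω ≠ ⊥ → i = j := by
      have hnm : ∀ᵐ ω ∂P, ω ∉ {ω | 2 ≤ s.toBRW.ZR 1 ω} := measure_eq_zero_iff_ae_notMem.1 h2
      filter_upwards [hnm] with ω hω i j hi hj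
      by_contra hij
      exact hω (BRW.aux_two_le_ZR hij hi hj)
    have hBk : ∀ᵐ ω ∂P, ∀ k : ℕ, ∀ j : ℕ, j ≠ s.W k ω → s.B k ω j = ⊥ := by
      rw [ae_all_iff]
      intro k
      have hcong : (fun ω => ∑' i : ℕ, (if s.toBRW.V [i] ω = ⊥ then 0 else
            eexp ((θ : EReal) * s.toBRW.V [i] ω - (ψ : EReal))
              * auxAloneF (fun j => s.toBRW.V [j] ω, i)))
          =ᵐ[P] fun ω => ∑' i : ℕ, (if s.toBRW.V [i] ω = ⊥ then 0 else
            eexp ((θ : EReal) * s.toBRW.V [i] ω - (ψ : EReal))) := by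
        filter_upwards [hamo] with ω hω
        refine tsum_congr fun i => ?_
        by_cases hi : s.toBRW.V [i] ω = ⊥
        · rw [if_pos hi, if_pos hi]
        · rw [if_neg hi, if_neg hi]
          have h1 : auxAloneF (fun j => s.toBRW.V [j] ω, i) = 1 := by
            rw [auxAloneF_eq, if_pos]
            intro j hj
            by_contra hjb
            exact hj (hω j i hjb hi)
          rw [h1, mul_one]
      have hsum : ∀ ω, (∑' i : ℕ, (if s.toBRW.V [i] ω = ⊥ then 0 else
            eexp ((θ : EReal) * s.toBRW.V [i] ω - (ψ : EReal))))
          = ENNReal.ofReal (Real.exp (-ψ)) * ∑' i : ℕ, (if s.toBRW.V [i] ω = ⊥ then 0 else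
            eexp ((θ : EReal) * s.toBRW.V [i] ω)) := by
        intro ω
        rw [← ENNReal.tsum_mul_left]
        refine tsum_congr fun i => ?_
        by_cases hi : s.toBRW.V [i] ω = ⊥
        · rw [if_pos hi, if_pos hi, mul_zero]
        · rw [if_neg hi, if_neg hi, aux_E_sub hθ]
      have hone : ∫⁻ ω, auxAloneF (s.B k ω, s.W k ω) ∂P = 1 := by
        rw [s.sbLaw k auxAloneF auxAloneF_measurable, lintegral_congr_ae hcong,
          lintegral_congr hsum, lintegral_const_mul' _ _ ENNReal.ofReal_ne_top, hlap,
          ← ENNReal.ofReal_mul (Real.exp_nonneg _), ← Real.exp_add, neg_add_cancel,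
          Real.exp_zero, ENNReal.ofReal_one]
      have hae := aux_ae_eq_one (g := fun ω => auxAloneF (s.B k ω, s.W k ω))
        (fun ω => by show auxAloneF (s.B k ω, s.W k ω) ≤ 1
                     rw [auxAloneF_eq]; split <;> simp) hone
      filter_upwards [hae] with ω hω j hj
      rw [auxAloneF_eq] at hω
      by_contra hne
      rw [if_neg (by push_neg; exact ⟨j, hj, hne⟩)] at hω
      exact zero_ne_one hω
    have hint1 : ∀ᵐ ω ∂P,
        (if s.Dinf ω (Set.Ioi 0) = 0 then (s.Dinf ω {0})⁻¹ else 0) = 1 := by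
      filter_upwards [hBk] with ω hω
      have hD : ∀ A : Set ℝ, s.Dinf ω A = cnt A 0 := by
        intro A
        rw [SpineSetup.Dinf]
        have hz : ∀ k : ℕ, (∑' i : ℕ, ∑' u : {u : Label // u.length = k},
            if i = s.W k ω then 0 else cnt A (s.atom k i u ω)) = 0 := by
          intro k
          rw [ENNReal.tsum_eq_zero]
          intro i
          rw [ENNReal.tsum_eq_zero]
          intro u
          by_cases hi : i = s.W k ω
          · rw [if_pos hi]
          · rw [if_neg hi, SpineSetup.atom, hω k i hi, EReal.bot_add, EReal.bot_sub]
            exact aux_cnt_bot A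
        rw [tsum_congr hz, tsum_zero, add_zero]
      rw [hD, hD, aux_cnt_zero_Ioi, if_pos rfl, aux_cnt_zero_singleton, inv_one]
    rw [SpineSetup.Cmass]
    calc ∫⁻ ω, (if s.Dinf ω (Set.Ioi 0) = 0 then (s.Dinf ω {0})⁻¹ else 0) ∂P
        = ∫⁻ _, 1 ∂P := lintegral_congr_ae hint1
      _ = 1 := by rw [lintegral_one, measure_univ]
  constructor
  · intro hc
    have hamo := hC hc
    have h1 : P {ω | ∀ i j : ℕ, s.toBRW.V [i] ω ≠ ⊥ → s.toBRW.V [j] ω ≠ ⊥ → i = j} = 1 :=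
      aux_prob_eq_one hamo
    refine le_antisymm prob_le_one ?_
    calc (1:ℝ≥0∞)
        = P {ω | ∀ i j : ℕ, s.toBRW.V [i] ω ≠ ⊥ → s.toBRW.V [j] ω ≠ ⊥ → i = j} := h1.symm
      _ ≤ P {ω | s.toBRW.ZR 1 ω ≤ 1} := measure_mono fun ω hω => BRW.aux_ZR_le_one hω
  · constructor
    · intro hlt
      by_contra hpos
      push_neg at hpos
      exact absurd (hB (le_antisymm hpos (zero_le))) hlt.ne
    · intro hpos
      rcases lt_or_eq_of_le hCle with h | h
      · exact h
      · exfalso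
        have hamo := hC h
        have hz : P {ω | 2 ≤ s.toBRW.ZR 1 ω} = 0 := by
          have hsub : {ω | 2 ≤ s.toBRW.ZR 1 ω} ⊆
              {ω | ¬ ∀ i j : ℕ, s.toBRW.V [i] ω ≠ ⊥ → s.toBRW.V [j] ω ≠ ⊥ → i = j} := by
            intro ω hω hamoω
            have hle := BRW.aux_ZR_le_one hamoω
            have h2 : (2:ℝ≥0∞) ≤ 1 := le_trans hω hle
            norm_num at h2
          refine le_antisymm (le_trans (measure_mono hsub) (le_of_eq (ae_iff.1 hamo)))
            (zero_le)
        exact absurd hz hpos.ne'
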